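/- Variance of the Y-process: under realizability (f* ∈ F), for every g ∈ F one has E[Y(g)] = −‖g − f*‖_μ² ≤ 0, and there is a universal constant c > 0 such that Var[Y(g)] ≤ c · ‖g − f*‖_μ² = −c · E[Y(g)]. -/

import Mathlib

open MeasureTheory ProbabilityTheory
open scoped ENNReal NNReal

noncomputable section

/-- Expected value of `f (s, ·)` under the policy kernel at state `s`: `f(s,π)`. -/
def polExp {S A : Type*} [MeasurableSpace S] [MeasurableSpace A]
    (pol : Kernel S A) (f : S × A → ℝ) (s : S) : ℝ :=
  ∫ a, f (s, a) ∂(pol s)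

/-- The Bellman evaluation operator `(Tf)(s,a) = r(s,a) + γ E_{s' ∼ P(·|s,a)} f(s',π)`. -/
def bellmanOp {S A : Type*} [MeasurableSpace S] [MeasurableSpace A]
    (γ : ℝ) (rew : S × A → ℝ) (P : Kernel (S × A) S) (pol : Kernel S A)
    (f : S × A → ℝ) : S × A → ℝ :=
  fun sa => rew sa + γ * ∫ s', polExp pol f s' ∂(P sa)

/-- Squared `L²(μ)` norm: `‖h‖_μ² = E_μ h²`. -/
def l2sq {X : Type*} [MeasurableSpace X] (μ : Measure X) (h : X → ℝ) : ℝ :=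
  ∫ x, (h x) ^ 2 ∂μ

/-- `L²(μ)` norm `‖h‖_μ`. -/
def l2 {X : Type*} [MeasurableSpace X] (μ : Measure X) (h : X → ℝ) : ℝ :=
  Real.sqrt (l2sq μ h)

/-- Distance in `L²(μ)` from `h` to the class `F`: `inf_{g ∈ F} ‖g − h‖_μ`. -/
def projDist {S A : Type*} [MeasurableSpace S] [MeasurableSpace A]
    (μ : Measure (S × A)) (F : Set ((S × A) → ℝ)) (h : (S × A) → ℝ) : ℝ :=
  sInf ((fun g => l2 μ (fun x => g x - h x)) '' F)

/-- Bellman error `‖f − Tf‖_μ`. -/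
def bellErr {S A : Type*} [MeasurableSpace S] [MeasurableSpace A]
    (γ : ℝ) (rew : S × A → ℝ) (P : Kernel (S × A) S) (pol : Kernel S A)
    (μ : Measure (S × A)) (f : (S × A) → ℝ) : ℝ :=
  l2 μ (fun x => f x - bellmanOp γ rew P pol f x)

/-- The localized class `F(r) = {f ∈ F : ‖f − Tf‖_μ ≤ r}`. -/
def Floc {S A : Type*} [MeasurableSpace S] [MeasurableSpace A]
    (γ : ℝ) (rew : S × A → ℝ) (P : Kernel (S × A) S) (pol : Kernel S A)
    (μ : Measure (S × A)) (F : Set ((S × A) → ℝ)) (r : ℝ) : Set ((S × A) → ℝ) :=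
  {f ∈ F | bellErr γ rew P pol μ f ≤ r}

/-- The incompleteness function `I(r) = sup_{f ∈ F(r)} inf_{g ∈ F} ‖g − Tf‖_μ`. -/
def Iloc {S A : Type*} [MeasurableSpace S] [MeasurableSpace A]
    (γ : ℝ) (rew : S × A → ℝ) (P : Kernel (S × A) S) (pol : Kernel S A)
    (μ : Measure (S × A)) (F : Set ((S × A) → ℝ)) (r : ℝ) : ℝ :=
  sSup ((fun f => projDist μ F (bellmanOp γ rew P pol f)) '' Floc γ rew P pol μ F r)

/-- The incompleteness factor
`β = sup_{f ∈ F, ‖f−Tf‖_μ > 0} inf_{g ∈ F} ‖g − Tf‖_μ / ‖f − Tf‖_μ`. -/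
def betaFac {S A : Type*} [MeasurableSpace S] [MeasurableSpace A]
    (γ : ℝ) (rew : S × A → ℝ) (P : Kernel (S × A) S) (pol : Kernel S A)
    (μ : Measure (S × A)) (F : Set ((S × A) → ℝ)) : ℝ :=
  sSup ((fun f => projDist μ F (bellmanOp γ rew P pol f) / bellErr γ rew P pol μ f) ''
    {f ∈ F | 0 < bellErr γ rew P pol μ f})

/-- The population minimax loss `M(f) = ‖f − Tf‖_μ² − inf_{g ∈ F} ‖g − Tf‖_μ²`. -/
def minimaxLoss {S A : Type*} [MeasurableSpace S] [MeasurableSpace A]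
    (γ : ℝ) (rew : S × A → ℝ) (P : Kernel (S × A) S) (pol : Kernel S A)
    (μ : Measure (S × A)) (F : Set ((S × A) → ℝ)) (f : (S × A) → ℝ) : ℝ :=
  l2sq μ (fun x => f x - bellmanOp γ rew P pol f x) -
    sInf ((fun g => l2sq μ (fun x => g x - bellmanOp γ rew P pol f x)) '' F)

/-- One step of the state-action chain: transition by `P` then act by `pol`. -/
def stepMeas {S A : Type*} [MeasurableSpace S] [MeasurableSpace A]
    (P : Kernel (S × A) S) (pol : Kernel S A) (sa : S × A) : Measure (S × A) :=
  (P sa).bind (fun s' => (pol s').map (fun a' => (s', a')))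

/-- The law `P_h` of `(S_h, A_h)` when following `pol` from the state `s0`. -/
def stepLaw {S A : Type*} [MeasurableSpace S] [MeasurableSpace A]
    (P : Kernel (S × A) S) (pol : Kernel S A) (s0 : S) : ℕ → Measure (S × A)
  | 0 => (pol s0).map (fun a => (s0, a))
  | (h + 1) => (stepLaw P pol s0 h).bind (stepMeas P pol)

/-- The discounted occupancy measure `d^π = (1−γ) Σ_{h≥0} γ^h P_h`. -/
def occMeas {S A : Type*} [MeasurableSpace S] [MeasurableSpace A]
    (γ : ℝ) (P : Kernel (S × A) S) (pol : Kernel S A) (s0 : S) : Measure (S × A) :=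
  ENNReal.ofReal (1 - γ) •
    Measure.sum (fun h : ℕ => ENNReal.ofReal γ ^ h • stepLaw P pol s0 h)

/-- The prediction error `E(f) = (f* − f)(s₀, π)`. -/
def predErr {S A : Type*} [MeasurableSpace S] [MeasurableSpace A]
    (pol : Kernel S A) (fstar f : S × A → ℝ) (s0 : S) : ℝ :=
  polExp pol (fun x => fstar x - f x) s0

/-- The concentrability coefficient `C = sup_{f ∈ F} ‖f − Tf‖_π² / ‖f − Tf‖_μ²`. -/
def concCoef {S A : Type*} [MeasurableSpace S] [MeasurableSpace A]
    (γ : ℝ) (rew : S × A → ℝ) (P : Kernel (S × A) S) (pol : Kernel S A)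
    (μ dpi : Measure (S × A)) (F : Set ((S × A) → ℝ)) : ℝ :=
  sSup ((fun f => l2sq dpi (fun x => f x - bellmanOp γ rew P pol f x) /
      l2sq μ (fun x => f x - bellmanOp γ rew P pol f x)) '' F)

/-- The law of a data tuple `(s, a, R, s')` with `(s,a) ∼ μ`, `R ∼ RL(s,a)`,
`s' ∼ P(·|s,a)`. -/
def tupleLaw {S A : Type*} [MeasurableSpace S] [MeasurableSpace A]
    (μ : Measure (S × A)) (RL : Kernel (S × A) ℝ) (P : Kernel (S × A) S) :
    Measure ((S × A) × ℝ × S) :=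
  μ.bind (fun sa => ((RL sa).prod (P sa)).map (fun rs => (sa, rs)))

/-- The squared TD cost `C(g,f) = (g(s,a) − R − γ f(s',π))²` of a tuple. -/
def tdCost {S A : Type*} [MeasurableSpace S] [MeasurableSpace A]
    (γ : ℝ) (pol : Kernel S A) (g f : S × A → ℝ) (t : (S × A) × ℝ × S) : ℝ :=
  (g t.1 - t.2.1 - γ * polExp pol f t.2.2) ^ 2

/-- The empirical loss `L̂(g,f)`: the average of the squared TD cost over the dataset. -/
def empLoss {S A : Type*} [MeasurableSpace S] [MeasurableSpace A]
    (γ : ℝ) (pol : Kernel S A) {n : ℕ} (D : Fin n → (S × A) × ℝ × S)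
    (g f : S × A → ℝ) : ℝ :=
  (∑ i, tdCost γ pol g f (D i)) / n

/-- The empirical minimax objective `M̂(f) = L̂(f,f) − inf_{g ∈ F} L̂(g,f)`. -/
def empMinimax {S A : Type*} [MeasurableSpace S] [MeasurableSpace A]
    (γ : ℝ) (pol : Kernel S A) (F : Set ((S × A) → ℝ)) {n : ℕ}
    (D : Fin n → (S × A) × ℝ × S) (f : S × A → ℝ) : ℝ :=
  empLoss γ pol D f f - sInf ((fun g => empLoss γ pol D g f) '' F)

/-- `f̂` is an empirical minimizer of `M̂` over `F`. -/
def IsEmpMinimizer {S A : Type*} [MeasurableSpace S] [MeasurableSpace A]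
    (γ : ℝ) (pol : Kernel S A) (F : Set ((S × A) → ℝ)) {n : ℕ}
    (D : Fin n → (S × A) × ℝ × S) (fhat : S × A → ℝ) : Prop :=
  fhat ∈ F ∧ ∀ f ∈ F, empMinimax γ pol F D fhat ≤ empMinimax γ pol F D f

/-- The law of a single Rademacher sign: `±1` with probability `1/2` each. -/
def signMeas : Measure ℝ :=
  (2⁻¹ : ℝ≥0∞) • Measure.dirac (1 : ℝ) + (2⁻¹ : ℝ≥0∞) • Measure.dirac (-1 : ℝ)

/-- Rademacher complexity of a class `H` with `n` covariates drawn i.i.d. from `ξ`: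
`R_n[H] = E sup_{h ∈ H} |(1/n) Σ_i ε_i h(x_i)|`. -/
def radComp {X : Type*} [MeasurableSpace X] (ξ : Measure X) (n : ℕ)
    (H : Set (X → ℝ)) : ℝ :=
  ∫ p, sSup ((fun h => |(∑ i, p.2 i * h (p.1 i)) / n|) '' H)
    ∂((Measure.pi (fun _ : Fin n => ξ)).prod (Measure.pi (fun _ : Fin n => signMeas)))

/-- The `X`-process `X(f) = C(f,f) − C(g_f, f)` as a function of the data tuple. -/
def Xproc {S A : Type*} [MeasurableSpace S] [MeasurableSpace A]
    (γ : ℝ) (pol : Kernel S A) (gf : ((S × A) → ℝ) → (S × A) → ℝ)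
    (f : S × A → ℝ) : (S × A) × ℝ × S → ℝ :=
  fun t => tdCost γ pol f f t - tdCost γ pol (gf f) f t

/-- The `Y`-process `Y(g) = C(f*,f*) − C(g, f*)` as a function of the data tuple. -/
def Yproc {S A : Type*} [MeasurableSpace S] [MeasurableSpace A]
    (γ : ℝ) (pol : Kernel S A) (fstar g : S × A → ℝ) : (S × A) × ℝ × S → ℝ :=
  fun t => tdCost γ pol fstar fstar t - tdCost γ pol g fstar t

end

noncomputable section

/-- Variance of the `Y`-process: under realizability, for every
`g ∈ F`, `E[Y(g)] = −‖g − f*‖_μ² ≤ 0`, and there is a universal constant `c > 0`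
such that `Var[Y(g)] ≤ c·‖g − f*‖_μ² = −c·E[Y(g)]`. -/
theorem variance_of_Y_process :
    ∃ c : ℝ, 0 < c ∧
      ∀ (S A : Type) [MeasurableSpace S] [MeasurableSpace A]
        (γ : ℝ), 0 ≤ γ → γ < 1 →
      ∀ (rew : S × A → ℝ), Measurable rew → (∀ x, rew x ∈ Set.Icc (0 : ℝ) 1) →
      ∀ (P : Kernel (S × A) S), IsMarkovKernel P →
      ∀ (pol : Kernel S A), IsMarkovKernel pol →
      ∀ (μ : Measure (S × A)), IsProbabilityMeasure μ →
      -- the reward kernel, supported on `[0,1]` with conditional mean `rew`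
      ∀ (RL : Kernel (S × A) ℝ), IsMarkovKernel RL →
        (∀ x, (RL x) (Set.Icc (0 : ℝ) 1)ᶜ = 0) →
        (∀ x, (∫ u, u ∂(RL x)) = rew x) →
      -- a class of measurable functions bounded by one
      ∀ (F : Set ((S × A) → ℝ)),
        (∀ f ∈ F, Measurable f) → (∀ f ∈ F, ∀ x, |f x| ≤ 1) →
      -- realizability: `f*` is a bounded measurable fixed point of `T` lying in `F`
      ∀ (fstar : (S × A) → ℝ), Measurable fstar → (∀ x, |fstar x| ≤ 1) →
        bellmanOp γ rew P pol fstar = fstar → fstar ∈ F →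
      ∀ g ∈ F,
        (∫ t, Yproc γ pol fstar g t ∂(tupleLaw μ RL P)) =
            -(l2sq μ (fun x => g x - fstar x)) ∧
        (∫ t, Yproc γ pol fstar g t ∂(tupleLaw μ RL P)) ≤ 0 ∧
        variance (Yproc γ pol fstar g) (tupleLaw μ RL P) ≤
          c * l2sq μ (fun x => g x - fstar x) ∧
        c * l2sq μ (fun x => g x - fstar x) =
          -(c * ∫ t, Yproc γ pol fstar g t ∂(tupleLaw μ RL P)) := by
  refine ⟨64, by norm_num, ?_⟩
  intro S A _ _ γ hγ0 hγ1 rew hrewm hrew01 P hP pol hpol μ hμ RL hRL hRLsupp hRLmean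
    F hFmeas hFbd fstar hfm hfb hfix hfF g hgF
  have hgm := hFmeas g hgF
  have hgb := hFbd g hgF
  -- value function `V = f*(·, π)`
  set V : S → ℝ := polExp pol fstar with hV
  have hVm : Measurable V := by
    have : StronglyMeasurable fun s => ∫ a, fstar (s, a) ∂pol s :=
      hfm.stronglyMeasurable.integral_kernel_prod_right'
    exact this.measurable
  have hVb : ∀ s, |V s| ≤ 1 := by
    intro s
    rw [hV, polExp, ← Real.norm_eq_abs]
    calc ‖∫ a, fstar (s, a) ∂pol s‖ ≤ 1 * ((pol s) Set.univ).toReal :=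
          norm_integral_le_of_norm_le_const (Filter.Eventually.of_forall fun a => by
            rw [Real.norm_eq_abs]; exact hfb _)
      _ = 1 := by simp
  set W : S × A → ℝ := fun sa => ∫ s', V s' ∂P sa with hW
  have hfixx : ∀ sa, rew sa + γ * W sa = fstar sa := by
    intro sa
    have := congrFun hfix sa
    simpa [bellmanOp, hW, hV] using this
  -- the difference `Δ = g - f*`
  set Δ : S × A → ℝ := fun x => g x - fstar x with hΔ
  have hΔm : Measurable Δ := hgm.sub hfm
  have hΔb : ∀ x, |Δ x| ≤ 2 := by
    intro x
    have h1 := abs_le.1 (hgb x)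
    have h2 := abs_le.1 (hfb x)
    rw [hΔ, abs_le]
    constructor <;> simp only <;> linarith
  -- the TD error `δ`
  set δ : (S × A) × ℝ × S → ℝ := fun t => fstar t.1 - t.2.1 - γ * V t.2.2 with hδ
  have hδm : Measurable δ := by
    exact ((hfm.comp measurable_fst).sub (measurable_fst.comp measurable_snd)).sub
      ((hVm.comp (measurable_snd.comp measurable_snd)).const_mul γ)
  have hδbd : ∀ (t : (S × A) × ℝ × S), t.2.1 ∈ Set.Icc (0 : ℝ) 1 → |δ t| ≤ 3 := by
    intro t ht
    have h1 := abs_le.1 (hfb t.1)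
    have h2 := abs_le.1 (hVb t.2.2)
    have hγV : |γ * V t.2.2| ≤ 1 := by
      rw [abs_mul, abs_of_nonneg hγ0]
      calc γ * |V t.2.2| ≤ 1 * 1 :=
            mul_le_mul (by linarith) (abs_le.2 h2) (abs_nonneg _) one_pos.le
        _ = 1 := one_mul 1
    have h3 := abs_le.1 hγV
    rw [hδ, abs_le]
    constructor <;> simp only <;> [linarith [ht.2]; linarith [ht.1]]
  have hYeq : Yproc γ pol fstar g = fun t => -(2 * Δ t.1) * δ t - Δ t.1 ^ 2 := by
    funext t
    simp only [Yproc, tdCost, hδ, hΔ, hV]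
    ring
  have hYm : Measurable (Yproc γ pol fstar g) := by
    rw [hYeq]
    exact (((hΔm.comp measurable_fst).const_mul 2).neg.mul hδm).sub
      ((hΔm.comp measurable_fst).pow_const 2)
  -- the kernel `κ = RL ×ₖ P` and the identification of the tuple law
  set κ : Kernel (S × A) (ℝ × S) := RL ×ₖ P with hκ
  have hκap : ∀ sa, κ sa = (RL sa).prod (P sa) := fun sa => Kernel.prod_apply _ _ _
  have htuple : tupleLaw μ RL P = μ ⊗ₘ κ := by
    have hmap : (fun sa => ((RL sa).prod (P sa)).map (fun rs => (sa, rs)))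
        = fun sa => (Kernel.id ×ₖ κ) sa := by
      funext sa
      rw [Kernel.prod_apply, Kernel.id_apply, Measure.dirac_prod, hκap]
    ext s hs
    rw [tupleLaw, Measure.bind_apply hs (by rw [hmap]; exact (Kernel.id ×ₖ κ).measurable.aemeasurable),
      Measure.compProd_apply hs]
    refine MeasureTheory.lintegral_congr fun sa => ?_
    rw [Measure.map_apply measurable_prodMk_left hs, hκap]
  rw [htuple]
  -- a.e. the reward lies in `[0,1]`
  have hκprob : ∀ sa, IsProbabilityMeasure (κ sa) := fun sa => by
    rw [hκap]; infer_instance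
  have haeκ : ∀ sa : S × A, ∀ᵐ rs : ℝ × S ∂κ sa, rs.1 ∈ Set.Icc (0 : ℝ) 1 := by
    intro sa
    rw [ae_iff, hκap]
    have hsub : {rs : ℝ × S | ¬ rs.1 ∈ Set.Icc (0 : ℝ) 1}
        ⊆ (Set.Icc (0 : ℝ) 1)ᶜ ×ˢ (Set.univ : Set S) := fun rs hrs => ⟨hrs, trivial⟩
    refine measure_mono_null hsub ?_
    rw [Measure.prod_prod, hRLsupp sa]
    simp
  have hRae : ∀ᵐ t ∂(μ ⊗ₘ κ), t.2.1 ∈ Set.Icc (0 : ℝ) 1 := by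
    rw [ae_iff]
    have hBm : MeasurableSet {t : (S × A) × ℝ × S | ¬ t.2.1 ∈ Set.Icc (0 : ℝ) 1} :=
      (measurable_fst.comp measurable_snd) measurableSet_Icc.compl
    rw [Measure.compProd_apply hBm]
    have hz : ∀ sa : S × A,
        (κ sa) (Prod.mk sa ⁻¹' {t : (S × A) × ℝ × S | ¬ t.2.1 ∈ Set.Icc (0 : ℝ) 1}) = 0 := by
      intro sa
      have := haeκ sa
      rw [ae_iff] at this
      exact this
    exact (MeasureTheory.lintegral_congr hz).trans lintegral_zero
  have hδb : ∀ᵐ t ∂(μ ⊗ₘ κ), |δ t| ≤ 3 := by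
    filter_upwards [hRae] with t ht using hδbd t ht
  have hYb : ∀ᵐ t ∂(μ ⊗ₘ κ), ‖Yproc γ pol fstar g t‖ ≤ 16 := by
    filter_upwards [hδb] with t ht
    have hΔt := hΔb t.1
    have had : |Δ t.1 * δ t| ≤ 6 := by
      rw [abs_mul]
      calc |Δ t.1| * |δ t| ≤ 2 * 3 :=
            mul_le_mul hΔt ht (abs_nonneg _) (by norm_num)
        _ = 6 := by norm_num
    obtain ⟨lo, hi⟩ := abs_le.1 had
    have ha2 : Δ t.1 ^ 2 ≤ 4 := by nlinarith [abs_le.1 hΔt]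
    rw [Real.norm_eq_abs, hYeq, abs_le]
    constructor <;> simp only <;> nlinarith [sq_nonneg (Δ t.1)]
  have hYint : Integrable (Yproc γ pol fstar g) (μ ⊗ₘ κ) :=
    (integrable_const (16 : ℝ)).mono' hYm.aestronglyMeasurable hYb
  -- inner expectation of `Y` is `-Δ²`
  have hδint : ∀ sa, Integrable (fun rs : ℝ × S => δ (sa, rs)) (κ sa) := by
    intro sa
    refine (integrable_const (3 : ℝ)).mono'
      (hδm.comp measurable_prodMk_left).aestronglyMeasurable ?_
    filter_upwards [haeκ sa] with rs hrs
    rw [Real.norm_eq_abs]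
    exact hδbd (sa, rs) hrs
  have hδzero : ∀ sa, ∫ rs, δ (sa, rs) ∂κ sa = 0 := by
    intro sa
    have hVint : Integrable V (P sa) :=
      (integrable_const (1 : ℝ)).mono' hVm.aestronglyMeasurable
        (Filter.Eventually.of_forall fun s => by rw [Real.norm_eq_abs]; exact hVb s)
    have hint := hδint sa
    have hfun : (fun rs : ℝ × S => δ (sa, rs)) = fun rs => fstar sa - rs.1 - γ * V rs.2 := by
      funext rs; rw [hδ]
    rw [hfun] at hint ⊢
    rw [hκap] at hint ⊢
    rw [MeasureTheory.integral_prod _ hint]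
    have hIn : ∀ R : ℝ, ∫ s', (fstar sa - R - γ * V s') ∂P sa = fstar sa - R - γ * W sa := by
      intro R
      rw [integral_sub (integrable_const _) (hVint.const_mul γ), integral_const,
        integral_const_mul]
      simp [hW]
    simp_rw [hIn]
    have hRint : Integrable (fun u : ℝ => u) (RL sa) := by
      refine (integrable_const (1 : ℝ)).mono' measurable_id.aestronglyMeasurable ?_
      have hae : ∀ᵐ (u : ℝ) ∂(RL sa), u ∈ Set.Icc (0 : ℝ) 1 := by
        rw [ae_iff]
        exact hRLsupp sa
      filter_upwards [hae] with u hu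
      rw [Real.norm_eq_abs]
      exact abs_le.2 ⟨by linarith [hu.1], hu.2⟩
    have hfun2 : (fun R : ℝ => fstar sa - R - γ * W sa)
        = fun R : ℝ => (fstar sa - γ * W sa) - R := by
      funext R; ring
    rw [hfun2, integral_sub (integrable_const _) hRint, integral_const, hRLmean sa]
    have := hfixx sa
    simp only [measureReal_def, measure_univ, ENNReal.toReal_one, one_smul]
    linarith
  have hinner : ∀ sa : S × A, ∫ rs, Yproc γ pol fstar g (sa, rs) ∂κ sa = -Δ sa ^ 2 := by
    intro sa
    haveI := hκprob sa
    have hfun : (fun rs : ℝ × S => Yproc γ pol fstar g (sa, rs))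
        = fun rs => -(2 * Δ sa) * δ (sa, rs) - Δ sa ^ 2 := by
      funext rs; rw [hYeq]
    rw [hfun, integral_sub ((hδint sa).const_mul _) (integrable_const _),
      integral_const_mul, hδzero sa, integral_const]
    simp
  have hEY : ∫ t, Yproc γ pol fstar g t ∂(μ ⊗ₘ κ) = -(l2sq μ Δ) := by
    rw [MeasureTheory.Measure.integral_compProd hYint]
    simp_rw [hinner]
    rw [MeasureTheory.integral_neg]
    rfl
  have hl2nonneg : (0 : ℝ) ≤ l2sq μ Δ := integral_nonneg fun x => sq_nonneg _
  refine ⟨hEY, by rw [hEY]; linarith, ?_, by rw [hEY]; ring⟩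
  -- variance bound
  have hY2int : Integrable (fun t => Yproc γ pol fstar g t ^ 2) (μ ⊗ₘ κ) := by
    refine (integrable_const (256 : ℝ)).mono' (hYm.pow_const 2).aestronglyMeasurable ?_
    filter_upwards [hYb] with t ht
    calc ‖Yproc γ pol fstar g t ^ 2‖ = |Yproc γ pol fstar g t| ^ 2 := by
          rw [Real.norm_eq_abs, abs_pow]
      _ ≤ 16 ^ 2 := by
            rw [Real.norm_eq_abs] at ht
            exact pow_le_pow_left₀ (abs_nonneg _) ht 2
      _ = 256 := by norm_num
  have hΔ2int : Integrable (fun t : (S × A) × ℝ × S => 64 * Δ t.1 ^ 2) (μ ⊗ₘ κ) := by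
    refine (integrable_const (256 : ℝ)).mono'
      (((hΔm.comp measurable_fst).pow_const 2).const_mul 64).aestronglyMeasurable
      (Filter.Eventually.of_forall fun t => ?_)
    have h4 : |Δ t.1| ^ 2 ≤ 2 ^ 2 := pow_le_pow_left₀ (abs_nonneg _) (hΔb t.1) 2
    rw [Real.norm_eq_abs, abs_mul, abs_pow, abs_of_nonneg (by norm_num : (0:ℝ) ≤ 64)]
    nlinarith
  calc variance (Yproc γ pol fstar g) (μ ⊗ₘ κ)
      ≤ ∫ t, Yproc γ pol fstar g t ^ 2 ∂(μ ⊗ₘ κ) :=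
        variance_le_expectation_sq hYm.aestronglyMeasurable
    _ ≤ ∫ t, 64 * Δ t.1 ^ 2 ∂(μ ⊗ₘ κ) := by
        refine integral_mono_ae hY2int hΔ2int ?_
        filter_upwards [hδb] with t ht
        have h64 : (2 * δ t + Δ t.1) ^ 2 ≤ 64 := by
          have h1 := abs_le.1 ht
          have h2 := abs_le.1 (hΔb t.1)
          nlinarith
        have hrw : Yproc γ pol fstar g t ^ 2 = Δ t.1 ^ 2 * (2 * δ t + Δ t.1) ^ 2 := by
          rw [hYeq]; ring
        rw [hrw]
        calc Δ t.1 ^ 2 * (2 * δ t + Δ t.1) ^ 2 ≤ Δ t.1 ^ 2 * 64 :=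
              mul_le_mul_of_nonneg_left h64 (sq_nonneg _)
          _ = 64 * Δ t.1 ^ 2 := mul_comm _ _
    _ = 64 * l2sq μ Δ := by
        rw [MeasureTheory.Measure.integral_compProd hΔ2int]
        have hc : ∀ sa : S × A, ∫ _ : ℝ × S, 64 * Δ sa ^ 2 ∂κ sa = 64 * Δ sa ^ 2 := by
          intro sa
          haveI := hκprob sa
          simp
        simp_rw [hc]
        rw [integral_const_mul]
        rfl


end
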